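/- Let G be a 3-edge-connected cubic graph. Then χ′(G) = 3 if and only if rd(G) = 3. -/

import Mathlib

variable {V : Type*} [Fintype V] [DecidableEq V]

/-- `S` separates `s` and `t` in `G`: after deleting the edges of `S`,
`s` and `t` are not reachable from each other. -/
def Separates (G : SimpleGraph V) (S : Set (Sym2 V)) (s t : V) : Prop :=
  ¬ (G.deleteEdges S).Reachable s t

/-- `λ(s,t)`: minimum size of a set of edges of `G` separating `s` and `t`. -/
noncomputable def lamST (G : SimpleGraph V) (s t : V) : ℕ :=
  sInf {n | ∃ S : Finset (Sym2 V), ↑S ⊆ G.edgeSet ∧ Separates G ↑S s t ∧ S.card = n}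

/-- Upper edge-connectivity `λ⁺(G)`: maximum of `λ(s,t)` over distinct pairs. -/
noncomputable def lamPlus (G : SimpleGraph V) : ℕ :=
  sSup {n | ∃ s t : V, s ≠ t ∧ lamST G s t = n}

/-- Edge-connectivity `λ(G)`: minimum size of an edge set whose deletion disconnects `G`. -/
noncomputable def edgeConn (G : SimpleGraph V) : ℕ :=
  sInf {n | ∃ S : Finset (Sym2 V), ↑S ⊆ G.edgeSet ∧ ¬ (G.deleteEdges ↑S).Connected ∧ S.card = n}

/-- `G` is `k`-edge-connected: every disconnecting edge set has at least `k` edges. -/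
def EdgeConnected (G : SimpleGraph V) (k : ℕ) : Prop :=
  ∀ S : Finset (Sym2 V), ↑S ⊆ G.edgeSet → ¬ (G.deleteEdges ↑S).Connected → k ≤ S.card

/-- `c` is a rainbow disconnection coloring of `G`: every pair of distinct vertices is
separated by an edge-cut whose edges receive pairwise distinct colors. -/
def IsRDColoring {α : Type*} (G : SimpleGraph V) (c : Sym2 V → α) : Prop :=
  ∀ s t : V, s ≠ t → ∃ S : Finset (Sym2 V), ↑S ⊆ G.edgeSet ∧ Set.InjOn c ↑S ∧
    Separates G ↑S s t

/-- The rainbow disconnection number `rd(G)`: minimum number of colors in a rainbow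
disconnection coloring of `G`. -/
noncomputable def rd (G : SimpleGraph V) : ℕ :=
  sInf {k | ∃ c : Sym2 V → ℕ, (∀ e ∈ G.edgeSet, c e < k) ∧ IsRDColoring G c}

/-- `c` is a proper edge-coloring of `G`: distinct edges sharing a vertex get distinct colors. -/
def IsProperEdgeColoring {α : Type*} (G : SimpleGraph V) (c : Sym2 V → α) : Prop :=
  ∀ e ∈ G.edgeSet, ∀ f ∈ G.edgeSet, e ≠ f → (∃ v : V, v ∈ e ∧ v ∈ f) → c e ≠ c f

/-- The chromatic index `χ'(G)`: minimum number of colors in a proper edge-coloring. -/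
noncomputable def chromIndex (G : SimpleGraph V) : ℕ :=
  sInf {k | ∃ c : Sym2 V → ℕ, (∀ e ∈ G.edgeSet, c e < k) ∧ IsProperEdgeColoring G c}

set_option linter.unusedSectionVars false
set_option maxHeartbeats 1000000

namespace RDaux

open Finset

variable (G : SimpleGraph V) [DecidableRel G.Adj] (c : Sym2 V → ℕ)

/-- count of ordered adjacent pairs with given color -/
def pcnt (S T : Finset V) (i : ℕ) : ℕ :=
  ((S ×ˢ T).filter (fun p => G.Adj p.1 p.2 ∧ c s(p.1, p.2) = i)).card

/-- count of ordered adjacent pairs -/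
def acnt (S T : Finset V) : ℕ :=
  ((S ×ˢ T).filter (fun p => G.Adj p.1 p.2)).card

def ni (a : V) (i : ℕ) : ℕ :=
  (Finset.univ.filter (fun b => G.Adj a b ∧ c s(a, b) = i)).card

def bdryP (X : Finset V) : Finset (V × V) :=
  (X ×ˢ Xᶜ).filter fun p => G.Adj p.1 p.2

def bdry (X : Finset V) : Finset (Sym2 V) :=
  (bdryP G X).image fun p => s(p.1, p.2)

def Rset (X : Finset V) : Prop :=
  X.Nonempty ∧ X ≠ Finset.univ ∧ ∀ i < 3, pcnt G c X Xᶜ i = 1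

def rb (a : V) : Prop := ∀ i < 3, ni G c a i = 1

lemma acnt_symm (S T : Finset V) : acnt G S T = acnt G T S := by
  unfold acnt
  refine Finset.card_nbij' (fun p => (p.2, p.1)) (fun p => (p.2, p.1)) ?_ ?_ ?_ ?_
  · intro p hp
    simp only [Finset.mem_coe, mem_filter, mem_product] at hp ⊢
    exact ⟨⟨hp.1.2, hp.1.1⟩, hp.2.symm⟩
  · intro p hp
    simp only [Finset.mem_coe, mem_filter, mem_product] at hp ⊢
    exact ⟨⟨hp.1.2, hp.1.1⟩, hp.2.symm⟩
  · intro p _; rfl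
  · intro p _; rfl

lemma pcnt_symm (S T : Finset V) (i : ℕ) : pcnt G c S T i = pcnt G c T S i := by
  unfold pcnt
  refine Finset.card_nbij' (fun p => (p.2, p.1)) (fun p => (p.2, p.1)) ?_ ?_ ?_ ?_
  · intro p hp
    simp only [Finset.mem_coe, mem_filter, mem_product] at hp ⊢
    refine ⟨⟨hp.1.2, hp.1.1⟩, hp.2.1.symm, ?_⟩
    rw [Sym2.eq_swap]; exact hp.2.2
  · intro p hp
    simp only [Finset.mem_coe, mem_filter, mem_product] at hp ⊢
    refine ⟨⟨hp.1.2, hp.1.1⟩, hp.2.1.symm, ?_⟩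
    rw [Sym2.eq_swap]; exact hp.2.2
  · intro p _; rfl
  · intro p _; rfl

lemma acnt_union_left {S S' : Finset V} (T : Finset V) (h : Disjoint S S') :
    acnt G (S ∪ S') T = acnt G S T + acnt G S' T := by
  unfold acnt
  rw [Finset.union_product, Finset.filter_union, Finset.card_union_of_disjoint]
  refine Finset.disjoint_filter_filter ?_
  rw [Finset.disjoint_left]
  intro p hp hp'
  rw [Finset.mem_product] at hp hp'
  exact (Finset.disjoint_left.1 h) hp.1 hp'.1

lemma acnt_union_right (S : Finset V) {T T' : Finset V} (h : Disjoint T T') :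
    acnt G S (T ∪ T') = acnt G S T + acnt G S T' := by
  rw [acnt_symm, acnt_union_left G _ h, acnt_symm, acnt_symm G T' S]

lemma pcnt_union_left {S S' : Finset V} (T : Finset V) (i : ℕ) (h : Disjoint S S') :
    pcnt G c (S ∪ S') T i = pcnt G c S T i + pcnt G c S' T i := by
  unfold pcnt
  rw [Finset.union_product, Finset.filter_union, Finset.card_union_of_disjoint]
  refine Finset.disjoint_filter_filter ?_
  rw [Finset.disjoint_left]
  intro p hp hp'
  rw [Finset.mem_product] at hp hp'
  exact (Finset.disjoint_left.1 h) hp.1 hp'.1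

lemma pcnt_union_right (S : Finset V) {T T' : Finset V} (i : ℕ) (h : Disjoint T T') :
    pcnt G c S (T ∪ T') i = pcnt G c S T i + pcnt G c S T' i := by
  rw [pcnt_symm, pcnt_union_left G c _ _ h, pcnt_symm, pcnt_symm G c T' S]


/-- generic: a symmetric irreflexive pair set on S×S has even cardinality -/
lemma even_card_of_symm (t : Finset (V × V))
    (hsymm : ∀ p ∈ t, (p.2, p.1) ∈ t) (hirr : ∀ p ∈ t, p.1 ≠ p.2) :
    Even t.card := by
  classical
  let φ : V ≃ Fin (Fintype.card V) := Fintype.equivFin V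
  have hsplit : t = t.filter (fun p => φ p.1 < φ p.2) ∪ t.filter (fun p => ¬ φ p.1 < φ p.2) :=
    (Finset.filter_union_filter_not_eq _ t).symm
  have hd : Disjoint (t.filter (fun p => φ p.1 < φ p.2)) (t.filter (fun p => ¬ φ p.1 < φ p.2)) :=
    Finset.disjoint_filter_filter_not t t _
  have hcard : t.card = (t.filter (fun p => φ p.1 < φ p.2)).card
      + (t.filter (fun p => ¬ φ p.1 < φ p.2)).card := by
    conv_lhs => rw [hsplit]
    exact Finset.card_union_of_disjoint hd
  have heq : (t.filter (fun p => φ p.1 < φ p.2)).card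
      = (t.filter (fun p => ¬ φ p.1 < φ p.2)).card := by
    refine Finset.card_nbij' (fun p => (p.2, p.1)) (fun p => (p.2, p.1)) ?_ ?_ ?_ ?_
    · intro p hp
      simp only [Finset.mem_coe, mem_filter] at hp ⊢
      exact ⟨hsymm p hp.1, by simp; omega⟩
    · intro p hp
      simp only [Finset.mem_coe, mem_filter] at hp ⊢
      refine ⟨hsymm p hp.1, ?_⟩
      have h1 : φ p.1 ≠ φ p.2 := fun h => hirr p hp.1 (φ.injective h)
      have := hp.2
      omega
    · intro p _; rfl
    · intro p _; rfl
  exact ⟨_, by rw [hcard, heq]⟩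

lemma even_acnt_diag (S : Finset V) : Even (acnt G S S) := by
  apply even_card_of_symm
  · intro p hp
    simp only [mem_filter, mem_product] at hp ⊢
    exact ⟨⟨hp.1.2, hp.1.1⟩, hp.2.symm⟩
  · intro p hp
    simp only [mem_filter, mem_product] at hp
    exact hp.2.ne

lemma even_pcnt_diag (S : Finset V) (i : ℕ) : Even (pcnt G c S S i) := by
  apply even_card_of_symm
  · intro p hp
    simp only [mem_filter, mem_product] at hp ⊢
    refine ⟨⟨hp.1.2, hp.1.1⟩, hp.2.1.symm, ?_⟩
    rw [Sym2.eq_swap]; exact hp.2.2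
  · intro p hp
    simp only [mem_filter, mem_product] at hp
    exact hp.2.1.ne


lemma acnt_univ_right (S : Finset V) : acnt G S Finset.univ = ∑ a ∈ S, G.degree a := by
  unfold acnt
  rw [Finset.card_filter, Finset.sum_product]
  refine Finset.sum_congr rfl fun a _ => ?_
  rw [SimpleGraph.degree, SimpleGraph.neighborFinset_eq_filter, Finset.card_filter]

lemma pcnt_univ_right (S : Finset V) (i : ℕ) : pcnt G c S Finset.univ i = ∑ a ∈ S, ni G c a i := by
  unfold pcnt ni
  rw [Finset.card_filter, Finset.sum_product]
  refine Finset.sum_congr rfl fun a _ => ?_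
  rw [Finset.card_filter]

/-- partition a filtered count by three colors. -/
lemma card_filter_three {β : Type*} [DecidableEq β] (s : Finset β) (f : β → ℕ)
    (hf : ∀ b ∈ s, f b < 3) :
    s.card = (s.filter (fun b => f b = 0)).card + (s.filter (fun b => f b = 1)).card
      + (s.filter (fun b => f b = 2)).card := by
  classical
  have h0 : s.card = (s.filter (fun b => f b = 0)).card + (s.filter (fun b => ¬ f b = 0)).card :=
    (Finset.card_filter_add_card_filter_not _).symm
  have h1 : (s.filter (fun b => ¬ f b = 0)).card
      = ((s.filter (fun b => ¬ f b = 0)).filter (fun b => f b = 1)).card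
      + ((s.filter (fun b => ¬ f b = 0)).filter (fun b => ¬ f b = 1)).card :=
    (Finset.card_filter_add_card_filter_not _).symm
  have e1 : (s.filter (fun b => ¬ f b = 0)).filter (fun b => f b = 1)
      = s.filter (fun b => f b = 1) := by
    rw [Finset.filter_filter]
    refine Finset.filter_congr fun b hb => ?_
    constructor
    · rintro ⟨-, h⟩; exact h
    · intro h; exact ⟨by omega, h⟩
  have e2 : (s.filter (fun b => ¬ f b = 0)).filter (fun b => ¬ f b = 1)
      = s.filter (fun b => f b = 2) := by
    rw [Finset.filter_filter]
    refine Finset.filter_congr fun b hb => ?_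
    have := hf b hb
    constructor
    · rintro ⟨h0', h1'⟩; omega
    · intro h; omega
  rw [h0, h1, e1, e2]; ring

lemma acnt_eq_pcnt_sum (Hc : ∀ e ∈ G.edgeSet, c e < 3) (S T : Finset V) :
    acnt G S T = pcnt G c S T 0 + pcnt G c S T 1 + pcnt G c S T 2 := by
  unfold acnt pcnt
  have h := card_filter_three ((S ×ˢ T).filter (fun p => G.Adj p.1 p.2))
    (fun p => c s(p.1, p.2)) (fun p hp => Hc _ ((SimpleGraph.mem_edgeSet G).2 (Finset.mem_filter.1 hp).2))
  rw [h]
  congr 1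
  · congr 1
    · rw [Finset.filter_filter]
    · rw [Finset.filter_filter]
  · rw [Finset.filter_filter]

lemma ni_sum (Hc : ∀ e ∈ G.edgeSet, c e < 3) (a : V) :
    ni G c a 0 + ni G c a 1 + ni G c a 2 = G.degree a := by
  unfold ni
  rw [SimpleGraph.degree, SimpleGraph.neighborFinset_eq_filter]
  have h := card_filter_three (Finset.univ.filter (G.Adj a)) (fun b => c s(a, b))
    (fun b hb => Hc _ ((SimpleGraph.mem_edgeSet G).2 (Finset.mem_filter.1 hb).2))
  rw [h]
  congr 1
  · congr 1
    · rw [Finset.filter_filter]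
    · rw [Finset.filter_filter]
  · rw [Finset.filter_filter]


lemma mem_bdry {X : Finset V} {a b : V} (ha : a ∈ X) (hb : b ∉ X) (hab : G.Adj a b) :
    s(a, b) ∈ bdry G X := by
  refine Finset.mem_image.2 ⟨(a, b), ?_, rfl⟩
  refine Finset.mem_filter.2 ⟨Finset.mem_product.2 ⟨ha, Finset.mem_compl.2 hb⟩, hab⟩

lemma bdry_card (X : Finset V) : (bdry G X).card = acnt G X Xᶜ := by
  unfold bdry
  rw [Finset.card_image_of_injOn]
  · rfl
  intro p hp q hq hpq
  rw [Finset.mem_coe] at hp hq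
  unfold bdryP at hp hq
  rw [Finset.mem_filter, Finset.mem_product, Finset.mem_compl] at hp hq
  rcases Sym2.mk_eq_mk_iff.1 hpq with h | h
  · exact h
  · exfalso
    have : p.1 = q.2 := congrArg Prod.fst h
    exact hq.1.2 (this ▸ hp.1.1)

lemma walk_out {X : Finset V} :
    ∀ {a t : V}, (G.deleteEdges (↑(bdry G X) : Set (Sym2 V))).Walk a t → t ∉ X → a ∉ X := by
  intro a t w
  induction w with
  | nil => intro ht; exact ht
  | cons h p ih =>
    intro ht hu
    rw [SimpleGraph.deleteEdges_adj] at h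
    exact h.2 (by exact_mod_cast mem_bdry G hu (ih ht) h.1)

lemma separates_bdry {X : Finset V} {s t : V} (hs : s ∈ X) (ht : t ∉ X) :
    Separates G (↑(bdry G X)) s t := by
  intro hreach
  obtain ⟨w⟩ := hreach
  exact walk_out G w ht hs

lemma bdry_edges (X : Finset V) : (↑(bdry G X) : Set (Sym2 V)) ⊆ G.edgeSet := by
  intro e he
  rw [Finset.mem_coe] at he
  obtain ⟨p, hp, rfl⟩ := Finset.mem_image.1 he
  exact (Finset.mem_filter.1 hp).2

lemma three_le_acnt (h3ec : EdgeConnected G 3) {X : Finset V}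
    (h1 : X.Nonempty) (h2 : Xᶜ.Nonempty) : 3 ≤ acnt G X Xᶜ := by
  obtain ⟨s, hs⟩ := h1
  obtain ⟨t, ht⟩ := h2
  rw [Finset.mem_compl] at ht
  rw [← bdry_card]
  refine h3ec _ (bdry_edges G X) ?_
  intro hconn
  exact separates_bdry G hs ht (hconn.preconnected s t)

/-- from a separating set, extract the reachable side -/
lemma reach_side {S : Finset (Sym2 V)} {s t : V} (hsep : Separates G (↑S) s t) :
    ∃ X : Finset V, s ∈ X ∧ t ∉ X ∧ bdry G X ⊆ S := by
  classical
  refine ⟨Finset.univ.filter (fun u => (G.deleteEdges (↑S : Set (Sym2 V))).Reachable s u), ?_, ?_, ?_⟩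
  · exact Finset.mem_filter.2 ⟨Finset.mem_univ _, SimpleGraph.Reachable.refl s⟩
  · intro h
    exact hsep (Finset.mem_filter.1 h).2
  · intro e he
    simp only [bdry, bdryP, Finset.mem_image] at he
    obtain ⟨p, hp, rfl⟩ := he
    rw [Finset.mem_filter, Finset.mem_product] at hp
    obtain ⟨⟨ha, hb⟩, hadj⟩ := hp
    by_contra heS
    have : (G.deleteEdges (↑S : Set (Sym2 V))).Adj p.1 p.2 :=
      SimpleGraph.deleteEdges_adj.2 ⟨hadj, by exact_mod_cast heS⟩
    have hreach : (G.deleteEdges (↑S : Set (Sym2 V))).Reachable s p.2 :=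
      ((Finset.mem_filter.1 ha).2).trans this.reachable
    rw [Finset.mem_compl] at hb
    exact hb (Finset.mem_filter.2 ⟨Finset.mem_univ _, hreach⟩)


lemma compl_nonempty_of_ne {X : Finset V} (h : X ≠ Finset.univ) : Xᶜ.Nonempty := by
  rw [Finset.nonempty_iff_ne_empty]
  intro hc
  exact h (by simpa [Finset.compl_eq_empty_iff] using hc)

lemma Rset.compl {X : Finset V} (h : Rset G c X) : Rset G c Xᶜ := by
  obtain ⟨h1, h2, h3⟩ := h
  refine ⟨compl_nonempty_of_ne h2, (Finset.compl_ne_univ_iff_nonempty X).2 h1, ?_⟩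
  intro i hi
  rw [compl_compl, pcnt_symm]
  exact h3 i hi

lemma Rset.acnt3 (Hc : ∀ e ∈ G.edgeSet, c e < 3) {X : Finset V} (h : Rset G c X) :
    acnt G X Xᶜ = 3 := by
  rw [acnt_eq_pcnt_sum G c Hc, h.2.2 0 (by norm_num), h.2.2 1 (by norm_num),
    h.2.2 2 (by norm_num)]

/-- key extraction: every distinct pair is separated by a rainbow set -/
lemma rset_sep (Hc : ∀ e ∈ G.edgeSet, c e < 3) (hrd : IsRDColoring G c)
    (h3ec : EdgeConnected G 3) {s t : V} (hst : s ≠ t) :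
    ∃ X : Finset V, s ∈ X ∧ t ∉ X ∧ Rset G c X := by
  obtain ⟨S, hSE, hInj, hSep⟩ := hrd s t hst
  obtain ⟨X, hsX, htX, hXS⟩ := reach_side G hSep
  have hXne : X.Nonempty := ⟨s, hsX⟩
  have hXnu : X ≠ Finset.univ := fun h => htX (h ▸ Finset.mem_univ t)
  have hScard : S.card ≤ 3 := by
    have himg : S.image c ⊆ Finset.range 3 := by
      intro k hk
      obtain ⟨e, heS, rfl⟩ := Finset.mem_image.1 hk
      exact Finset.mem_range.2 (Hc e (hSE heS))
    calc S.card = (S.image c).card := (Finset.card_image_of_injOn hInj).symm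
      _ ≤ (Finset.range 3).card := Finset.card_le_card himg
      _ = 3 := by simp
  have h3b : 3 ≤ (bdry G X).card := by
    rw [bdry_card]
    exact three_le_acnt G h3ec hXne (compl_nonempty_of_ne hXnu)
  have hSeq : S = bdry G X := by
    refine (Finset.eq_of_subset_of_card_le hXS ?_).symm
    omega
  have hScard3 : S.card = 3 := le_antisymm hScard (hSeq ▸ h3b)
  -- image of colors is exactly range 3
  have himg : S.image c = Finset.range 3 := by
    refine Finset.eq_of_subset_of_card_le ?_ ?_
    · intro k hk
      obtain ⟨e, heS, rfl⟩ := Finset.mem_image.1 hk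
      exact Finset.mem_range.2 (Hc e (hSE heS))
    · rw [Finset.card_image_of_injOn hInj, hScard3]; simp
  refine ⟨X, hsX, htX, hXne, hXnu, ?_⟩
  intro i hi
  -- pcnt X Xᶜ i = card of bdryP filtered by color = card of S filtered by color = 1
  have hpc : pcnt G c X Xᶜ i = ((bdryP G X).filter (fun p => c s(p.1, p.2) = i)).card := by
    unfold pcnt bdryP
    rw [Finset.filter_filter]
  have himg2 : ((bdryP G X).filter (fun p => c s(p.1, p.2) = i)).card
      = ((bdry G X).filter (fun e => c e = i)).card := by
    unfold bdry
    rw [Finset.filter_image]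
    rw [Finset.card_image_of_injOn]
    intro p hp q hq hpq
    have hp' : p ∈ (↑(bdryP G X) : Set (V × V)) := by
      have := Finset.mem_coe.1 (by exact_mod_cast hp)
      exact Finset.mem_coe.2 (Finset.mem_filter.1 this).1
    have hq' : q ∈ (↑(bdryP G X) : Set (V × V)) := by
      have := Finset.mem_coe.1 (by exact_mod_cast hq)
      exact Finset.mem_coe.2 (Finset.mem_filter.1 this).1
    -- injectivity on bdryP
    rw [Finset.mem_coe] at hp' hq'
    unfold bdryP at hp' hq'
    rw [Finset.mem_filter, Finset.mem_product, Finset.mem_compl] at hp' hq'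
    rcases Sym2.mk_eq_mk_iff.1 hpq with h | h
    · exact h
    · exfalso
      have : p.1 = q.2 := congrArg Prod.fst h
      exact hq'.1.2 (this ▸ hp'.1.1)
  have hone : ((bdry G X).filter (fun e => c e = i)).card = 1 := by
    rw [← hSeq]
    have hiim : i ∈ S.image c := himg ▸ Finset.mem_range.2 hi
    obtain ⟨e, heS, hei⟩ := Finset.mem_image.1 hiim
    rw [Finset.card_eq_one]
    refine ⟨e, ?_⟩
    ext f
    simp only [Finset.mem_filter, Finset.mem_singleton]
    constructor
    · rintro ⟨hfS, hfi⟩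
      exact hInj hfS heS (by rw [hfi, hei])
    · rintro rfl; exact ⟨heS, hei⟩
  rw [hpc, himg2, hone]


lemma handshake (hcubic : ∀ v : V, G.degree v = 3) (S : Finset V) :
    3 * S.card = acnt G S S + acnt G S Sᶜ := by
  have h1 : acnt G S Finset.univ = ∑ a ∈ S, G.degree a := acnt_univ_right G S
  have h2 : (Finset.univ : Finset V) = S ∪ Sᶜ := (Finset.union_compl S).symm
  have h3 : acnt G S Finset.univ = acnt G S S + acnt G S Sᶜ := by
    conv_lhs => rw [h2]
    exact acnt_union_right G S disjoint_compl_right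
  rw [← h3, h1]
  rw [Finset.sum_congr rfl (fun a _ => hcubic a), Finset.sum_const, smul_eq_mul, mul_comm]


lemma arith1 (ab ac ad bc bd cd dA dD : ℕ)
    (eX : 3 = ac+ad+(bc+bd)) (eY : 3 = ab+ad+(bc+cd))
    (eA : dA = ab+(ac+ad)) (eD : dD = ad+(bd+cd)) : dA + dD + 2*bc = 6 := by omega

lemma arith2 (ab ac ad bc bd cd dB dC : ℕ)
    (eX : 3 = ac+ad+(bc+bd)) (eY : 3 = ab+ad+(bc+cd))
    (eB : dB = ab+(bc+bd)) (eC : dC = ac+(bc+cd)) : dB + dC + 2*ad = 6 := by omega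

lemma arith3 (a dA kA : ℕ) (hsA : 3*a = kA+kA+dA) : (a + dA) % 2 = 0 := by omega

lemma arith4 (x kX : ℕ) (hsX : 3*x = kX+kX+3) : x % 2 = 1 := by omega

lemma arith5 (n kU : ℕ) (h : 3*n = kU+kU) : n % 2 = 0 := by omega

lemma arith_final (dA dB dC dD bc ad a b c d : ℕ)
    (k1 : dA + dD + 2*bc = 6) (k2 : dB + dC + 2*ad = 6)
    (lA : 3 ≤ dA) (lB : 3 ≤ dB) (lC : 3 ≤ dC) (lD : 3 ≤ dD)
    (pa : (a + dA) % 2 = 0) (pb : (b + dB) % 2 = 0)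
    (pc : (c + dC) % 2 = 0) (pd : (d + dD) % 2 = 0)
    (hx : (a+b) % 2 = 1) (hy : (a+c) % 2 = 1)
    (hn : (a+b+(c+d)) % 2 = 0) : False := by omega

lemma no_cross (Hc : ∀ e ∈ G.edgeSet, c e < 3) (hcubic : ∀ v : V, G.degree v = 3)
    (h3ec : EdgeConnected G 3) {X Y : Finset V} (hX : Rset G c X) (hY : Rset G c Y)
    (h1 : (X ∩ Y).Nonempty) (h2 : (X \ Y).Nonempty) (h3 : (Y \ X).Nonempty)
    (h4 : (Xᶜ ∩ Yᶜ).Nonempty) : False := by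
  set A := X ∩ Y with hA
  set B := X \ Y with hB
  set C := Y \ X with hC
  set D := Xᶜ ∩ Yᶜ with hD
  have mA : ∀ u, u ∈ A ↔ u ∈ X ∧ u ∈ Y := by intro u; simp [hA]
  have mB : ∀ u, u ∈ B ↔ u ∈ X ∧ u ∉ Y := by intro u; simp [hB]
  have mC : ∀ u, u ∈ C ↔ u ∈ Y ∧ u ∉ X := by intro u; simp [hC, And.comm]
  have mD : ∀ u, u ∈ D ↔ u ∉ X ∧ u ∉ Y := by intro u; simp [hD]
  have hXAB : X = A ∪ B := by ext u; simp only [Finset.mem_union, mA, mB]; tauto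
  have hYAC : Y = A ∪ C := by ext u; simp only [Finset.mem_union, mA, mC]; tauto
  have hXc : Xᶜ = C ∪ D := by
    ext u; simp only [Finset.mem_union, Finset.mem_compl, mC, mD]; tauto
  have hYc : Yᶜ = B ∪ D := by
    ext u; simp only [Finset.mem_union, Finset.mem_compl, mB, mD]; tauto
  have hAc : Aᶜ = B ∪ (C ∪ D) := by
    ext u; simp only [Finset.mem_union, Finset.mem_compl, mA, mB, mC, mD]; tauto
  have hBc : Bᶜ = A ∪ (C ∪ D) := by
    ext u; simp only [Finset.mem_union, Finset.mem_compl, mA, mB, mC, mD]; tauto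
  have hCc : Cᶜ = A ∪ (B ∪ D) := by
    ext u; simp only [Finset.mem_union, Finset.mem_compl, mA, mB, mC, mD]; tauto
  have hDc : Dᶜ = A ∪ (B ∪ C) := by
    ext u; simp only [Finset.mem_union, Finset.mem_compl, mA, mB, mC, mD]; tauto
  have dAB : Disjoint A B := by
    rw [Finset.disjoint_left]; intro u hu hu'; rw [mA] at hu; rw [mB] at hu'; tauto
  have dAC : Disjoint A C := by
    rw [Finset.disjoint_left]; intro u hu hu'; rw [mA] at hu; rw [mC] at hu'; tauto
  have dAD : Disjoint A D := by
    rw [Finset.disjoint_left]; intro u hu hu'; rw [mA] at hu; rw [mD] at hu'; tauto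
  have dBC : Disjoint B C := by
    rw [Finset.disjoint_left]; intro u hu hu'; rw [mB] at hu; rw [mC] at hu'; tauto
  have dBD : Disjoint B D := by
    rw [Finset.disjoint_left]; intro u hu hu'; rw [mB] at hu; rw [mD] at hu'; tauto
  have dCD : Disjoint C D := by
    rw [Finset.disjoint_left]; intro u hu hu'; rw [mC] at hu; rw [mD] at hu'; tauto
  -- expansions
  have eX : acnt G X Xᶜ = (acnt G A C + acnt G A D) + (acnt G B C + acnt G B D) := by
    conv_lhs => rw [hXc, hXAB]
    rw [acnt_union_left G _ dAB, acnt_union_right G _ dCD, acnt_union_right G _ dCD]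
  have eY : acnt G Y Yᶜ = (acnt G A B + acnt G A D) + (acnt G C B + acnt G C D) := by
    conv_lhs => rw [hYc, hYAC]
    rw [acnt_union_left G _ dAC, acnt_union_right G _ dBD, acnt_union_right G _ dBD]
  have eA : acnt G A Aᶜ = acnt G A B + (acnt G A C + acnt G A D) := by
    conv_lhs => rw [hAc]
    rw [acnt_union_right G _ (Finset.disjoint_union_right.2 ⟨dBC, dBD⟩),
      acnt_union_right G _ dCD]
  have eB : acnt G B Bᶜ = acnt G B A + (acnt G B C + acnt G B D) := by
    conv_lhs => rw [hBc]
    rw [acnt_union_right G _ (Finset.disjoint_union_right.2 ⟨dAC, dAD⟩),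
      acnt_union_right G _ dCD]
  have eC : acnt G C Cᶜ = acnt G C A + (acnt G C B + acnt G C D) := by
    conv_lhs => rw [hCc]
    rw [acnt_union_right G _ (Finset.disjoint_union_right.2 ⟨dAB.symm.symm, dAD⟩),
      acnt_union_right G _ dBD]
  have eD : acnt G D Dᶜ = acnt G D A + (acnt G D B + acnt G D C) := by
    conv_lhs => rw [hDc]
    rw [acnt_union_right G _ (Finset.disjoint_union_right.2 ⟨dAB.symm.symm, dAC⟩),
      acnt_union_right G _ dBC]
  have sBA : acnt G B A = acnt G A B := acnt_symm G B A
  have sCA : acnt G C A = acnt G A C := acnt_symm G C A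
  have sCB : acnt G C B = acnt G B C := acnt_symm G C B
  have sDA : acnt G D A = acnt G A D := acnt_symm G D A
  have sDB : acnt G D B = acnt G B D := acnt_symm G D B
  have sDC : acnt G D C = acnt G C D := acnt_symm G D C
  rw [sBA] at eB
  rw [sCA, sCB] at eC
  rw [sDA, sDB, sDC] at eD
  rw [sCB] at eY
  -- handshakes and evens
  have hsA := handshake G hcubic A
  have hsB := handshake G hcubic B
  have hsC := handshake G hcubic C
  have hsD := handshake G hcubic D
  have hsX := handshake G hcubic X
  have hsY := handshake G hcubic Y
  have hsU := handshake G hcubic (Finset.univ : Finset V)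
  obtain ⟨kA, hkA⟩ := even_acnt_diag G A
  obtain ⟨kB, hkB⟩ := even_acnt_diag G B
  obtain ⟨kC, hkC⟩ := even_acnt_diag G C
  obtain ⟨kD, hkD⟩ := even_acnt_diag G D
  obtain ⟨kX, hkX⟩ := even_acnt_diag G X
  obtain ⟨kY, hkY⟩ := even_acnt_diag G Y
  obtain ⟨kU, hkU⟩ := even_acnt_diag G (Finset.univ : Finset V)
  have hUc : acnt G (Finset.univ : Finset V) (Finset.univ : Finset V)ᶜ = 0 := by
    rw [Finset.compl_univ]
    unfold acnt
    rw [Finset.product_empty, Finset.filter_empty, Finset.card_empty]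
  -- cut values
  have hX3 : acnt G X Xᶜ = 3 := Rset.acnt3 G c Hc hX
  have hY3 : acnt G Y Yᶜ = 3 := Rset.acnt3 G c Hc hY
  -- lower bounds
  have lA : 3 ≤ acnt G A Aᶜ := by
    refine three_le_acnt G h3ec h1 ?_
    obtain ⟨x, hx⟩ := h4
    exact ⟨x, by rw [Finset.mem_compl, mA]; rw [mD] at hx; tauto⟩
  have lB : 3 ≤ acnt G B Bᶜ := by
    refine three_le_acnt G h3ec h2 ?_
    obtain ⟨x, hx⟩ := h3
    exact ⟨x, by rw [Finset.mem_compl, mB]; rw [mC] at hx; tauto⟩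
  have lC : 3 ≤ acnt G C Cᶜ := by
    refine three_le_acnt G h3ec h3 ?_
    obtain ⟨x, hx⟩ := h2
    exact ⟨x, by rw [Finset.mem_compl, mC]; rw [mB] at hx; tauto⟩
  have lD : 3 ≤ acnt G D Dᶜ := by
    refine three_le_acnt G h3ec h4 ?_
    obtain ⟨x, hx⟩ := h1
    exact ⟨x, by rw [Finset.mem_compl, mD]; rw [mA] at hx; tauto⟩
  -- cards
  have cX : X.card = A.card + B.card := by rw [hXAB, Finset.card_union_of_disjoint dAB]
  have cY : Y.card = A.card + C.card := by rw [hYAC, Finset.card_union_of_disjoint dAC]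
  have cXc : Xᶜ.card = C.card + D.card := by rw [hXc, Finset.card_union_of_disjoint dCD]
  have cN : X.card + Xᶜ.card = Fintype.card V := Finset.card_add_card_compl X
  have cU : (Finset.univ : Finset V).card = Fintype.card V := Finset.card_univ
  -- staged arithmetic
  have eX' := eX; rw [hX3] at eX'
  have eY' := eY; rw [hY3] at eY'
  have k1 := arith1 _ _ _ _ _ _ _ _ eX' eY' eA eD
  have k2 := arith2 _ _ _ _ _ _ _ _ eX' eY' eB eC
  rw [hkA] at hsA; rw [hkB] at hsB; rw [hkC] at hsC; rw [hkD] at hsD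
  have pa := arith3 _ _ _ hsA
  have pb := arith3 _ _ _ hsB
  have pc := arith3 _ _ _ hsC
  have pd := arith3 _ _ _ hsD
  rw [hkX, hX3] at hsX
  rw [hkY, hY3] at hsY
  have hx := arith4 _ _ hsX
  have hy := arith4 _ _ hsY
  rw [hkU, hUc, add_zero, cU] at hsU
  have hn := arith5 _ _ hsU
  rw [cX] at hx
  rw [cY] at hy
  have hnn : A.card + B.card + (C.card + D.card) = Fintype.card V := by
    rw [← cX, ← cXc]; exact cN
  rw [← hnn] at hn
  exact arith_final _ _ _ _ _ _ _ _ _ _ k1 k2 lA lB lC lD pa pb pc pd hx hy hn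


lemma sum_ni_mod (X : Finset V) (i : ℕ) :
    (∑ a ∈ X, ni G c a i) % 2 = pcnt G c X Xᶜ i % 2 := by
  have h1 : pcnt G c X Finset.univ i = ∑ a ∈ X, ni G c a i := pcnt_univ_right G c X i
  have h2 : (Finset.univ : Finset V) = X ∪ Xᶜ := (Finset.union_compl X).symm
  have h3 : pcnt G c X Finset.univ i = pcnt G c X X i + pcnt G c X Xᶜ i := by
    conv_lhs => rw [h2]
    exact pcnt_union_right G c X i disjoint_compl_right
  obtain ⟨k, hk⟩ := even_pcnt_diag G c X i
  omega

lemma rb_of_odds (Hc : ∀ e ∈ G.edgeSet, c e < 3) (hcubic : ∀ v : V, G.degree v = 3) {a : V}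
    (h : ∀ i < 3, ni G c a i % 2 = 1) : rb G c a := by
  have hs := ni_sum G c Hc a
  rw [hcubic a] at hs
  have h0 := h 0 (by norm_num)
  have h1 := h 1 (by norm_num)
  have h2 := h 2 (by norm_num)
  intro i hi
  interval_cases i <;> omega

lemma card_odd_of_rset (Hc : ∀ e ∈ G.edgeSet, c e < 3) (hcubic : ∀ v : V, G.degree v = 3)
    {X : Finset V} (hX : Rset G c X) : X.card % 2 = 1 := by
  have h1 := handshake G hcubic X
  have h2 := Rset.acnt3 G c Hc hX
  obtain ⟨k, hk⟩ := even_acnt_diag G X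
  omega

lemma rb_of_mem (Hc : ∀ e ∈ G.edgeSet, c e < 3) (hcubic : ∀ v : V, G.degree v = 3)
    (h3ec : EdgeConnected G 3)
    (hsep : ∀ s t : V, s ≠ t → ∃ X : Finset V, s ∈ X ∧ t ∉ X ∧ Rset G c X) (v : V) :
    ∀ N (X : Finset V), X.card ≤ N → Rset G c X → v ∉ X → ∀ u ∈ X, rb G c u := by
  intro N
  induction N with
  | zero =>
    intro X hcard hR hv u hu
    exfalso
    obtain ⟨x, hx⟩ := hR.1
    have := Finset.card_pos.2 ⟨x, hx⟩
    omega
  | succ N ih =>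
    intro X hcard hR hv u hu
    by_cases hcov : ∃ W : Finset V, Rset G c W ∧ v ∉ W ∧ W ⊂ X ∧ u ∈ W
    · obtain ⟨W, hW, hvW, hWX, huW⟩ := hcov
      have hlt : W.card < X.card := Finset.card_lt_card hWX
      exact ih W (by omega) hW hvW u huW
    · -- u is the unique uncovered vertex; all others are rainbow
      have hall : ∀ w ∈ X, w ≠ u → rb G c w := by
        intro w hw hwu
        obtain ⟨Z, hwZ, huZ, hZ⟩ := hsep w u hwu
        by_cases hvZ : v ∈ Z
        · exfalso
          apply hcov
          have hsub : Zᶜ ⊆ X := by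
            by_contra hns
            obtain ⟨z0, hz0c, hz0x⟩ := Finset.not_subset.1 hns
            refine no_cross G c Hc hcubic h3ec hR (Rset.compl G c hZ)
              ⟨u, ?_⟩ ⟨w, ?_⟩ ⟨z0, ?_⟩ ⟨v, ?_⟩
            · rw [Finset.mem_inter, Finset.mem_compl]; exact ⟨hu, huZ⟩
            · rw [Finset.mem_sdiff, Finset.mem_compl]; exact ⟨hw, by simpa using hwZ⟩
            · rw [Finset.mem_sdiff]; exact ⟨hz0c, hz0x⟩
            · rw [Finset.mem_inter, Finset.mem_compl, Finset.mem_compl]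
              exact ⟨hv, by simp [hvZ]⟩
          refine ⟨Zᶜ, Rset.compl G c hZ, by simpa using hvZ, ?_, Finset.mem_compl.2 huZ⟩
          rw [Finset.ssubset_iff_subset_ne]
          refine ⟨hsub, fun h => ?_⟩
          rw [← h, Finset.mem_compl] at hw
          exact hw hwZ
        · -- v ∉ Z : Z ⊂ X, apply ih
          have hsub : Z ⊆ X := by
            by_contra hns
            obtain ⟨z0, hz0c, hz0x⟩ := Finset.not_subset.1 hns
            refine no_cross G c Hc hcubic h3ec hR hZ
              ⟨w, ?_⟩ ⟨u, ?_⟩ ⟨z0, ?_⟩ ⟨v, ?_⟩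
            · rw [Finset.mem_inter]; exact ⟨hw, hwZ⟩
            · rw [Finset.mem_sdiff]; exact ⟨hu, huZ⟩
            · rw [Finset.mem_sdiff]; exact ⟨hz0c, hz0x⟩
            · rw [Finset.mem_inter, Finset.mem_compl, Finset.mem_compl]
              exact ⟨hv, hvZ⟩
          have hlt : Z.card < X.card := by
            refine Finset.card_lt_card ?_
            rw [Finset.ssubset_iff_subset_ne]
            refine ⟨hsub, fun h => huZ (h ▸ hu)⟩
          exact ih Z (by omega) hZ hvZ w hwZ
      -- parity forces u rainbow
      refine rb_of_odds G c Hc hcubic ?_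
      intro i hi
      have hmod : (∑ a ∈ X, ni G c a i) % 2 = 1 := by
        rw [sum_ni_mod G c X i, hR.2.2 i hi]
      have hsplit : ∑ a ∈ X.erase u, ni G c a i + ni G c u i = ∑ a ∈ X, ni G c a i :=
        Finset.sum_erase_add X _ hu
      have herase : ∑ a ∈ X.erase u, ni G c a i = X.card - 1 := by
        have : ∀ a ∈ X.erase u, ni G c a i = 1 := by
          intro a ha
          exact hall a (Finset.mem_of_mem_erase ha) (Finset.ne_of_mem_erase ha) i hi
        rw [Finset.sum_congr rfl this, Finset.sum_const, smul_eq_mul, mul_one,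
          Finset.card_erase_of_mem hu]
      have hodd := card_odd_of_rset G c Hc hcubic hR
      have hpos : 1 ≤ X.card := Finset.card_pos.2 ⟨u, hu⟩
      omega

lemma all_rb (Hc : ∀ e ∈ G.edgeSet, c e < 3) (hcubic : ∀ v : V, G.degree v = 3)
    (h3ec : EdgeConnected G 3)
    (hsep : ∀ s t : V, s ≠ t → ∃ X : Finset V, s ∈ X ∧ t ∉ X ∧ Rset G c X)
    [Nonempty V] : ∀ u : V, rb G c u := by
  obtain ⟨v⟩ := ‹Nonempty V›
  have hothers : ∀ u : V, u ≠ v → rb G c u := by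
    intro u hu
    obtain ⟨Z, huZ, hvZ, hZ⟩ := hsep u v hu
    exact rb_of_mem G c Hc hcubic h3ec hsep v Z.card Z le_rfl hZ hvZ u huZ
  intro u
  by_cases huv : u = v
  · subst huv
    refine rb_of_odds G c Hc hcubic ?_
    intro i hi
    have h0 : pcnt G c Finset.univ (Finset.univ : Finset V)ᶜ i = 0 := by
      rw [Finset.compl_univ]
      unfold pcnt
      rw [Finset.product_empty, Finset.filter_empty, Finset.card_empty]
    have hmod : (∑ a : V, ni G c a i) % 2 = 0 := by
      rw [sum_ni_mod G c Finset.univ i, h0]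
    have hsplit : ∑ a ∈ (Finset.univ : Finset V).erase u, ni G c a i + ni G c u i
        = ∑ a : V, ni G c a i := Finset.sum_erase_add _ _ (Finset.mem_univ u)
    have herase : ∑ a ∈ (Finset.univ : Finset V).erase u, ni G c a i
        = Fintype.card V - 1 := by
      have : ∀ a ∈ (Finset.univ : Finset V).erase u, ni G c a i = 1 := by
        intro a ha
        exact hothers a (Finset.ne_of_mem_erase ha) i hi
      rw [Finset.sum_congr rfl this, Finset.sum_const, smul_eq_mul, mul_one,
        Finset.card_erase_of_mem (Finset.mem_univ u), Finset.card_univ]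
    have hneven : Fintype.card V % 2 = 0 := by
      have h1 := handshake G hcubic (Finset.univ : Finset V)
      have h2 : acnt G Finset.univ (Finset.univ : Finset V)ᶜ = 0 := by
        rw [Finset.compl_univ]
        unfold acnt
        rw [Finset.product_empty, Finset.filter_empty, Finset.card_empty]
      obtain ⟨k, hk⟩ := even_acnt_diag G (Finset.univ : Finset V)
      rw [Finset.card_univ] at h1
      omega
    have hpos : 1 ≤ Fintype.card V := Fintype.card_pos
    omega
  · exact hothers u huv


lemma V_nonempty (h3ec : EdgeConnected G 3) : Nonempty V := by
  by_contra h
  rw [not_nonempty_iff] at h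
  have h2 := h3ec ∅ (by simp) (fun hconn => h.elim hconn.nonempty.some)
  simp at h2

lemma edge_rep {e : Sym2 V} (he : e ∈ G.edgeSet) {x : V} (hx : x ∈ e) :
    ∃ y, G.Adj x y ∧ e = s(x, y) := by
  induction e with
  | _ a b =>
    rcases Sym2.mem_iff.1 hx with rfl | rfl
    · exact ⟨b, (SimpleGraph.mem_edgeSet G).1 he, rfl⟩
    · exact ⟨a, ((SimpleGraph.mem_edgeSet G).1 he).symm, Sym2.eq_swap⟩

lemma proper_of_all_rb (Hc : ∀ e ∈ G.edgeSet, c e < 3) (hrb : ∀ u : V, rb G c u) :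
    IsProperEdgeColoring G c := by
  rintro e he f hf hef ⟨x, hxe, hxf⟩ hc
  obtain ⟨y, hady, rfl⟩ := edge_rep G he hxe
  obtain ⟨y', hady', rfl⟩ := edge_rep G hf hxf
  have hyy : y ≠ y' := fun h => hef (by rw [h])
  have hi : c s(x, y) < 3 := Hc _ he
  have h1 : ni G c x (c s(x, y)) = 1 := hrb x _ hi
  have hsub : ({y, y'} : Finset V) ⊆
      Finset.univ.filter (fun b => G.Adj x b ∧ c s(x, b) = c s(x, y)) := by
    intro b hb
    rcases Finset.mem_insert.1 hb with rfl | hb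
    · exact Finset.mem_filter.2 ⟨Finset.mem_univ _, hady, rfl⟩
    · rw [Finset.mem_singleton] at hb
      subst hb
      exact Finset.mem_filter.2 ⟨Finset.mem_univ _, hady', hc.symm⟩
  have h2 : ({y, y'} : Finset V).card = 2 := Finset.card_pair hyy
  have := Finset.card_le_card hsub
  unfold ni at h1
  omega

lemma exists_pair (hcubic : ∀ v : V, G.degree v = 3) [Nonempty V] :
    ∃ s t : V, s ≠ t := by
  obtain ⟨v0⟩ := ‹Nonempty V›
  have : 0 < G.degree v0 := by rw [hcubic v0]; norm_num
  obtain ⟨w, hw⟩ := (G.degree_pos_iff_exists_adj v0).1 this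
  exact ⟨v0, w, (G.ne_of_adj hw)⟩

lemma three_le_of_proper (hcubic : ∀ v : V, G.degree v = 3) [Nonempty V] {k : ℕ}
    (c' : Sym2 V → ℕ) (hck : ∀ e ∈ G.edgeSet, c' e < k)
    (hp : IsProperEdgeColoring G c') : 3 ≤ k := by
  obtain ⟨v0⟩ := ‹Nonempty V›
  have h3 : (G.neighborFinset v0).card = 3 := hcubic v0
  obtain ⟨b1, b2, b3, h12, h13, h23, hset⟩ := Finset.card_eq_three.1 h3
  have hb : ∀ b ∈ ({b1, b2, b3} : Finset V), G.Adj v0 b := by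
    intro b hb
    rw [← hset] at hb
    exact (SimpleGraph.mem_neighborFinset G v0 b).1 hb
  have h1 := hb b1 (by simp)
  have h2 := hb b2 (by simp)
  have h3' := hb b3 (by simp)
  have hed : ∀ {b b' : V}, G.Adj v0 b → G.Adj v0 b' → b ≠ b' → c' s(v0, b) ≠ c' s(v0, b') := by
    intro b b' hab hab' hbb'
    refine hp _ ((SimpleGraph.mem_edgeSet G).2 hab) _ ((SimpleGraph.mem_edgeSet G).2 hab') ?_
      ⟨v0, Sym2.mem_mk_left _ _, Sym2.mem_mk_left _ _⟩
    intro h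
    rcases Sym2.eq_iff.1 h with h' | h'
    · exact hbb' h'.2
    · exact (G.ne_of_adj hab') h'.1
  have c12 := hed h1 h2 h12
  have c13 := hed h1 h3' h13
  have c23 := hed h2 h3' h23
  have hT : ({c' s(v0, b1), c' s(v0, b2), c' s(v0, b3)} : Finset ℕ) ⊆ Finset.range k := by
    intro n hn
    simp only [Finset.mem_insert, Finset.mem_singleton] at hn
    rcases hn with rfl | rfl | rfl
    · exact Finset.mem_range.2 (hck _ ((SimpleGraph.mem_edgeSet G).2 h1))
    · exact Finset.mem_range.2 (hck _ ((SimpleGraph.mem_edgeSet G).2 h2))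
    · exact Finset.mem_range.2 (hck _ ((SimpleGraph.mem_edgeSet G).2 h3'))
  have hcard : ({c' s(v0, b1), c' s(v0, b2), c' s(v0, b3)} : Finset ℕ).card = 3 := by
    rw [Finset.card_insert_of_notMem, Finset.card_insert_of_notMem, Finset.card_singleton]
    · simp only [Finset.mem_singleton]; exact c23
    · simp only [Finset.mem_insert, Finset.mem_singleton]
      push_neg
      exact ⟨c12, c13⟩
  have := Finset.card_le_card hT
  rw [hcard, Finset.card_range] at this
  exact this


end RDaux

theorem chromIndex_eq_three_iff_rd_eq_three (G : SimpleGraph V) [DecidableRel G.Adj]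
    (hcubic : ∀ v : V, G.degree v = 3) (h3ec : EdgeConnected G 3) :
    chromIndex G = 3 ↔ rd G = 3 := by
  classical
  have hV : Nonempty V := RDaux.V_nonempty G h3ec
  obtain ⟨s0, t0, hst0⟩ := RDaux.exists_pair G hcubic
  have hrd_lb : ∀ k ∈ {k | ∃ c : Sym2 V → ℕ, (∀ e ∈ G.edgeSet, c e < k) ∧ IsRDColoring G c},
      3 ≤ k := by
    rintro k ⟨c, hck, hc⟩
    obtain ⟨S, hSE, hInj, hSep⟩ := hc s0 t0 hst0
    have h3 : 3 ≤ S.card := h3ec S hSE (fun hconn => hSep (hconn.preconnected s0 t0))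
    have hk : S.card ≤ k := by
      calc S.card = (S.image c).card := (Finset.card_image_of_injOn hInj).symm
        _ ≤ (Finset.range k).card := Finset.card_le_card (by
            intro n hn
            obtain ⟨e, heS, rfl⟩ := Finset.mem_image.1 hn
            exact Finset.mem_range.2 (hck e (hSE heS)))
        _ = k := by simp
    omega
  have hchrom_lb : ∀ k ∈ {k | ∃ c : Sym2 V → ℕ, (∀ e ∈ G.edgeSet, c e < k) ∧
      IsProperEdgeColoring G c}, 3 ≤ k := by
    rintro k ⟨c, hck, hp⟩
    exact RDaux.three_le_of_proper G hcubic c hck hp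
  constructor
  · intro hchi
    have hne : {k | ∃ c : Sym2 V → ℕ, (∀ e ∈ G.edgeSet, c e < k) ∧
        IsProperEdgeColoring G c}.Nonempty := by
      by_contra h
      rw [Set.not_nonempty_iff_eq_empty] at h
      rw [chromIndex, h, Nat.sInf_empty] at hchi
      exact absurd hchi (by norm_num)
    have h3mem : 3 ∈ {k | ∃ c : Sym2 V → ℕ, (∀ e ∈ G.edgeSet, c e < k) ∧
        IsProperEdgeColoring G c} := by
      rw [← hchi]
      exact Nat.sInf_mem hne
    obtain ⟨c, hc3, hp⟩ := h3mem
    have hrdc : IsRDColoring G c := by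
      intro s t hst
      refine ⟨RDaux.bdry G {s}, RDaux.bdry_edges G {s}, ?_,
        RDaux.separates_bdry G (Finset.mem_singleton_self s) (by simp [Ne.symm hst])⟩
      intro e he f hf hef
      by_contra hEF
      have hs_mem : ∀ {g : Sym2 V}, g ∈ (↑(RDaux.bdry G {s}) : Set (Sym2 V)) → s ∈ g := by
        intro g hg
        rw [Finset.mem_coe] at hg
        obtain ⟨p, hp', rfl⟩ := Finset.mem_image.1 hg
        have := (Finset.mem_filter.1 hp').1
        rw [Finset.mem_product] at this
        have hp1 : p.1 = s := Finset.mem_singleton.1 this.1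
        rw [← hp1]
        exact Sym2.mem_mk_left _ _
      exact hp e (RDaux.bdry_edges G {s} he) f (RDaux.bdry_edges G {s} hf) hEF
        ⟨s, hs_mem he, hs_mem hf⟩ hef
    have h3rd : 3 ∈ {k | ∃ c : Sym2 V → ℕ, (∀ e ∈ G.edgeSet, c e < k) ∧ IsRDColoring G c} :=
      ⟨c, hc3, hrdc⟩
    exact le_antisymm (Nat.sInf_le h3rd) (le_csInf ⟨3, h3rd⟩ hrd_lb)
  · intro hrdeq
    have hne : {k | ∃ c : Sym2 V → ℕ, (∀ e ∈ G.edgeSet, c e < k) ∧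
        IsRDColoring G c}.Nonempty := by
      by_contra h
      rw [Set.not_nonempty_iff_eq_empty] at h
      rw [rd, h, Nat.sInf_empty] at hrdeq
      exact absurd hrdeq (by norm_num)
    have h3mem : 3 ∈ {k | ∃ c : Sym2 V → ℕ, (∀ e ∈ G.edgeSet, c e < k) ∧
        IsRDColoring G c} := by
      rw [← hrdeq]
      exact Nat.sInf_mem hne
    obtain ⟨c, hc3, hrdc⟩ := h3mem
    have hsep : ∀ s t : V, s ≠ t → ∃ X : Finset V, s ∈ X ∧ t ∉ X ∧ RDaux.Rset G c X :=
      fun s t hst => RDaux.rset_sep G c hc3 hrdc h3ec hst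
    have hall := RDaux.all_rb G c hc3 hcubic h3ec hsep
    have hp := RDaux.proper_of_all_rb G c hc3 hall
    have h3c : 3 ∈ {k | ∃ c : Sym2 V → ℕ, (∀ e ∈ G.edgeSet, c e < k) ∧
        IsProperEdgeColoring G c} := ⟨c, hc3, hp⟩
    exact le_antisymm (Nat.sInf_le h3c) (le_csInf ⟨3, h3c⟩ hchrom_lb)
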